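/- If a PARS is distribution confluent, then it has unique limit distributions: if D is the root of two infinite ↠-chains (Eᵢ) and (Fⱼ) whose induced mathematical distributions converge in L¹ distance to terminal mathematical distributions E_∞ and F_∞ respectively, then E_∞ = F_∞. -/

import Mathlib

open Relation
open scoped NNReal ENNReal

abbrev PDist (A : Type) := List (ℝ≥0 × A)

namespace PPARS

variable {A X : Type}

/-- Total weight of a list distribution. -/
def weight (D : PDist A) : ℝ≥0 := (D.map Prod.fst).sum

/-- Scale every weight of a distribution by `α`. -/
def scale (α : ℝ≥0) (D : PDist A) : PDist A := D.map (fun pa => (α * pa.1, pa.2))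

open Classical in
/-- Total weight that `D` assigns to the element `a`. -/
noncomputable def wt (D : PDist A) (a : A) : ℝ≥0 :=
  (D.map (fun pa => if pa.2 = a then pa.1 else 0)).sum

/-- The Flip rule, closed under list contexts. -/
inductive FlipS : PDist A → PDist A → Prop
  | mk (E₁ E₂ : PDist A) (p q : ℝ≥0) (a b : A) :
      FlipS (E₁ ++ [(p,a),(q,b)] ++ E₂) (E₁ ++ [(q,b),(p,a)] ++ E₂)

/-- The Join rule, closed under list contexts. -/
inductive JoinS : PDist A → PDist A → Prop
  | mk (E₁ E₂ : PDist A) (p q : ℝ≥0) (a : A) :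
      JoinS (E₁ ++ [(p,a),(q,a)] ++ E₂) (E₁ ++ [(p+q,a)] ++ E₂)

/-- The Split rule, closed under list contexts. -/
inductive SplitS : PDist A → PDist A → Prop
  | mk (E₁ E₂ : PDist A) (p q : ℝ≥0) (a : A) :
      SplitS (E₁ ++ [(p+q,a)] ++ E₂) (E₁ ++ [(p,a),(q,a)] ++ E₂)

/-- One `∼`-step: congruence closure of Flip, Join and Split. -/
def SimStep (D E : PDist A) : Prop := FlipS D E ∨ JoinS D E ∨ SplitS D E

/-- One Flip-or-Join step. -/
def FJ (D E : PDist A) : Prop := FlipS D E ∨ JoinS D E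

/-- Distribution equivalence `≈`. -/
def DEquiv : PDist A → PDist A → Prop := ReflTransGen SimStep

/-- Parallel evolution `⇒_P` for a PARS relation `R`. -/
inductive PEvol (R : A → PDist A → Prop) : PDist A → PDist A → Prop
  | nil : PEvol R [] []
  | keep {ds ds' : PDist A} (p : ℝ≥0) (a : A) :
      PEvol R ds ds' → PEvol R ((p,a) :: ds) ((p,a) :: ds')
  | evolve {a : A} {D ds ds' : PDist A} (p : ℝ≥0) :
      R a D → PEvol R ds ds' → PEvol R ((p,a) :: ds) (scale p D ++ ds')

/-- Proper parallel evolution `⇒_P¹`: at least one element evolves. -/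
inductive PEvol1 (R : A → PDist A → Prop) : PDist A → PDist A → Prop
  | evolve {a : A} {D ds ds' : PDist A} (p : ℝ≥0) :
      R a D → PEvol R ds ds' → PEvol1 R ((p,a) :: ds) (scale p D ++ ds')
  | keep {ds ds' : PDist A} (p : ℝ≥0) (a : A) :
      PEvol1 R ds ds' → PEvol1 R ((p,a) :: ds) ((p,a) :: ds')

/-- The determinisation relation `↠ = ⇒_P ∪ ≈`. -/
def Red (R : A → PDist A → Prop) (D E : PDist A) : Prop := PEvol R D E ∨ DEquiv D E

/-- `R` defines a PARS: successor distributions are normalised. -/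
def IsPARS (R : A → PDist A → Prop) : Prop := ∀ a D, R a D → weight D = 1

/-- A terminal element has no successor distribution. -/
def Terminal (R : A → PDist A → Prop) (a : A) : Prop := ∀ D, ¬ R a D

/-- A terminal distribution contains only terminal elements. -/
def TerminalD (R : A → PDist A → Prop) (D : PDist A) : Prop := ∀ pa ∈ D, Terminal R pa.2

/-- Classical confluence of a relation. -/
def Confluent (r : X → X → Prop) : Prop :=
  ∀ a b c, ReflTransGen r a b → ReflTransGen r a c →
    ∃ d, ReflTransGen r b d ∧ ReflTransGen r c d

/-- Raw (finite) computation trees. -/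
inductive CTree (A : Type) where
  | leaf (a : A)
  | node (a : A) (cs : List (ℝ≥0 × CTree A))

def CTree.root : CTree A → A
  | .leaf a => a
  | .node a _ => a

/-- `IsTree R t a`: `t` is a computation tree of the PARS `R` with root `a`. -/
inductive IsTree (R : A → PDist A → Prop) : CTree A → A → Prop
  | leaf (a : A) : IsTree R (.leaf a) a
  | node (a : A) (cs : List (ℝ≥0 × CTree A)) :
      R a (cs.map fun x => (x.1, x.2.root)) →
      (∀ x ∈ cs, IsTree R x.2 x.2.root) →
      IsTree R (.node a cs) a

mutual
/-- Support of a computation tree. -/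
def supp : CTree A → PDist A
  | .leaf a => [(1, a)]
  | .node _ cs => suppL cs
def suppL : List (ℝ≥0 × CTree A) → PDist A
  | [] => []
  | (p, t) :: ts => scale p (supp t) ++ suppL ts
end

/-- A tree is maximal when all its leaves are terminal elements. -/
inductive MaximalT (R : A → PDist A → Prop) : CTree A → Prop
  | leaf (a : A) : Terminal R a → MaximalT R (.leaf a)
  | node (a : A) (cs : List (ℝ≥0 × CTree A)) :
      (∀ x ∈ cs, MaximalT R x.2) → MaximalT R (.node a cs)

end PPARS


namespace PPARS
variable {A X : Type}

/-- `R` modulo `≈`: an equivalence step, then `r`, then an equivalence step. -/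
def ModE (r : PDist A → PDist A → Prop) : PDist A → PDist A → Prop :=
  Relation.Comp DEquiv (Relation.Comp r DEquiv)

/-- `n`-fold composition of a relation. -/
def npow (r : X → X → Prop) : ℕ → X → X → Prop
  | 0 => Eq
  | n+1 => Relation.Comp r (npow r n)

/-- A local relation on distributions. -/
def LocalRel (r : PDist A → PDist A → Prop) : Prop :=
  ∀ (α β : ℝ≥0) (D₁ D₂ E : PDist A), r (scale α D₁ ++ scale β D₂) E →
    ∃ E₁ E₂, E = scale α E₁ ++ scale β E₂ ∧ r D₁ E₁ ∧ r D₂ E₂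

/-- A compositional relation on distributions. -/
def Compositional (r : PDist A → PDist A → Prop) : Prop :=
  ∀ (α β : ℝ≥0) (D₁ E₁ D₂ E₂ : PDist A), r D₁ E₁ → r D₂ E₂ →
    r (scale α D₁ ++ scale β D₂) (scale α E₁ ++ scale β E₂)

/-- `(γ, δ)` closes `(α, β)` on `D`. -/
def Closes (γ δ α β : PDist A → PDist A → Prop) (D : PDist A) : Prop :=
  ∀ E F, α D E → β D F → ∃ C, γ E C ∧ δ F C

open Classical in
/-- Liveness: total weight assigned to non-terminal elements. -/
noncomputable def liv (R : A → PDist A → Prop) (D : PDist A) : ℝ≥0 :=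
  (D.map (fun pa => if Terminal R pa.2 then 0 else pa.1)).sum

/-- L¹ distance between mathematical distributions. -/
noncomputable def fdist (f g : A → ℝ≥0) : ℝ := ∑' a : A, |(f a : ℝ) - (g a : ℝ)|

/-- L¹ distance between the mathematical distributions induced by two list
distributions. -/
noncomputable def ldist (D E : PDist A) : ℝ := fdist (wt D) (wt E)

end PPARS
namespace PPARS
open Classical
variable {A : Type} {R : A → PDist A → Prop}

lemma wt_nil (a : A) : wt ([] : PDist A) a = 0 := rfl

lemma wt_cons (p : ℝ≥0) (b : A) (D : PDist A) (a : A) :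
    wt ((p,b) :: D) a = (if b = a then p else 0) + wt D a := by
  simp [wt]

lemma wt_append (D E : PDist A) (a : A) : wt (D ++ E) a = wt D a + wt E a := by
  simp [wt]

lemma wt_scale (p : ℝ≥0) (D : PDist A) (a : A) : wt (scale p D) a = p * wt D a := by
  induction D with
  | nil => simp [wt, scale]
  | cons pa D ih =>
      obtain ⟨q, b⟩ := pa
      simp only [scale, List.map_cons] at ih ⊢
      rw [wt_cons, wt_cons, ih]
      split_ifs <;> ring

lemma weight_nil : weight ([] : PDist A) = 0 := rfl

lemma weight_cons (p : ℝ≥0) (b : A) (D : PDist A) :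
    weight ((p,b) :: D) = p + weight D := by simp [weight]

lemma weight_append (D E : PDist A) : weight (D ++ E) = weight D + weight E := by
  simp [weight]

lemma weight_scale (p : ℝ≥0) (D : PDist A) : weight (scale p D) = p * weight D := by
  induction D with
  | nil => simp [weight, scale]
  | cons pa D ih =>
      obtain ⟨q, b⟩ := pa
      simp only [scale, List.map_cons] at ih ⊢
      rw [weight_cons, weight_cons, ih]; ring

lemma liv_nil : liv R ([] : PDist A) = 0 := rfl

lemma liv_cons (p : ℝ≥0) (b : A) (D : PDist A) :
    liv R ((p,b) :: D) = (if Terminal R b then 0 else p) + liv R D := by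
  simp [liv]

lemma liv_append (D E : PDist A) : liv R (D ++ E) = liv R D + liv R E := by
  simp [liv]

lemma liv_scale (p : ℝ≥0) (D : PDist A) : liv R (scale p D) = p * liv R D := by
  induction D with
  | nil => simp [liv, scale]
  | cons pa D ih =>
      obtain ⟨q, b⟩ := pa
      simp only [scale, List.map_cons] at ih ⊢
      rw [liv_cons, liv_cons, ih]
      split_ifs <;> ring

lemma liv_le_weight (D : PDist A) : liv R D ≤ weight D := by
  induction D with
  | nil => simp [liv_nil, weight_nil]
  | cons pa D ih =>
      obtain ⟨q, b⟩ := pa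
      rw [liv_cons, weight_cons]
      gcongr
      split_ifs <;> simp

end PPARS
namespace PPARS
open Classical
variable {A : Type} {R : A → PDist A → Prop}

lemma simstep_wt {D E : PDist A} (h : SimStep D E) (a : A) : wt E a = wt D a := by
  rcases h with h | h | h
  · rcases h with ⟨E₁, E₂, p, q, b, c⟩
    simp only [wt_append, wt_cons, wt_nil]
    ring
  · rcases h with ⟨E₁, E₂, p, q, b⟩
    simp only [wt_append, wt_cons, wt_nil]
    split_ifs <;> ring
  · rcases h with ⟨E₁, E₂, p, q, b⟩
    simp only [wt_append, wt_cons, wt_nil]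
    split_ifs <;> ring

lemma simstep_weight {D E : PDist A} (h : SimStep D E) : weight E = weight D := by
  rcases h with h | h | h
  · rcases h with ⟨E₁, E₂, p, q, b, c⟩
    simp only [weight_append, weight_cons, weight_nil]; ring
  · rcases h with ⟨E₁, E₂, p, q, b⟩
    simp only [weight_append, weight_cons, weight_nil]; ring
  · rcases h with ⟨E₁, E₂, p, q, b⟩
    simp only [weight_append, weight_cons, weight_nil]; ring

lemma simstep_liv {D E : PDist A} (h : SimStep D E) : liv R E = liv R D := by
  rcases h with h | h | h
  · rcases h with ⟨E₁, E₂, p, q, b, c⟩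
    simp only [liv_append, liv_cons, liv_nil]; split_ifs <;> ring
  · rcases h with ⟨E₁, E₂, p, q, b⟩
    simp only [liv_append, liv_cons, liv_nil]; split_ifs <;> ring
  · rcases h with ⟨E₁, E₂, p, q, b⟩
    simp only [liv_append, liv_cons, liv_nil]; split_ifs <;> ring

lemma dequiv_wt {D E : PDist A} (h : DEquiv D E) (a : A) : wt E a = wt D a := by
  induction h with
  | refl => rfl
  | tail _ h ih => rw [simstep_wt h, ih]

lemma dequiv_weight {D E : PDist A} (h : DEquiv D E) : weight E = weight D := by
  induction h with
  | refl => rfl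
  | tail _ h ih => rw [simstep_weight h, ih]

lemma dequiv_liv {D E : PDist A} (h : DEquiv D E) : liv R E = liv R D := by
  induction h with
  | refl => rfl
  | tail _ h ih => rw [simstep_liv h, ih]

lemma pevol_weight (hR : IsPARS R) {D E : PDist A} (h : PEvol R D E) :
    weight E = weight D := by
  induction h with
  | nil => rfl
  | keep p a _ ih => rw [weight_cons, weight_cons, ih]
  | evolve p hr _ ih =>
      rw [weight_append, weight_scale, hR _ _ hr, weight_cons, ih]; ring

lemma pevol_wt_term {D E : PDist A} (h : PEvol R D E) {a : A}
    (ha : Terminal R a) : wt D a ≤ wt E a := by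
  induction h with
  | nil => exact le_refl _
  | keep p b _ ih => rw [wt_cons, wt_cons]; gcongr
  | @evolve b G ds ds' p hr _ ih =>
      rw [wt_cons, wt_append]
      have hb : ¬ (b = a) := fun hba => ha G (hba ▸ hr)
      simp only [hb, if_false, zero_add]
      exact le_add_of_nonneg_of_le zero_le ih

lemma pevol_liv (hR : IsPARS R) {D E : PDist A} (h : PEvol R D E) :
    liv R E ≤ liv R D := by
  induction h with
  | nil => exact le_refl _
  | keep p b _ ih => rw [liv_cons, liv_cons]; gcongr
  | @evolve b G ds ds' p hr _ ih =>
      rw [liv_cons, liv_append, liv_scale]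
      have hb : ¬ Terminal R b := fun hb => hb G hr
      simp only [hb, if_false]
      have : p * liv R G ≤ p := by
        calc p * liv R G ≤ p * weight G := by gcongr; exact liv_le_weight G
          _ = p := by rw [hR _ _ hr, mul_one]
      exact add_le_add this ih

lemma red_star_weight (hR : IsPARS R) {D E : PDist A}
    (h : Relation.ReflTransGen (Red R) D E) : weight E = weight D := by
  induction h with
  | refl => rfl
  | tail _ h ih =>
      rcases h with h | h
      · rw [pevol_weight hR h, ih]
      · rw [dequiv_weight h, ih]

lemma red_star_wt_term {D E : PDist A} (h : Relation.ReflTransGen (Red R) D E)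
    {a : A} (ha : Terminal R a) : wt D a ≤ wt E a := by
  induction h with
  | refl => exact le_refl _
  | tail _ h ih =>
      rcases h with h | h
      · exact ih.trans (pevol_wt_term h ha)
      · exact ih.trans (le_of_eq (dequiv_wt h a).symm)

lemma red_star_liv (hR : IsPARS R) {D E : PDist A}
    (h : Relation.ReflTransGen (Red R) D E) : liv R E ≤ liv R D := by
  induction h with
  | refl => exact le_refl _
  | tail _ h ih =>
      rcases h with h | h
      · exact (pevol_liv hR h).trans ih
      · exact (dequiv_liv h).le.trans ih

end PPARS
namespace PPARS
open Classical
variable {A : Type} {R : A → PDist A → Prop}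

/-- The finite set of elements occurring in a list distribution. -/
noncomputable def elems (D : PDist A) : Finset A :=
  haveI := Classical.decEq A
  (D.map Prod.snd).toFinset

lemma wt_eq_zero_of_not_mem {D : PDist A} {a : A} (h : a ∉ elems D) : wt D a = 0 := by
  induction D with
  | nil => rfl
  | cons pa D ih =>
      obtain ⟨p, b⟩ := pa
      have hba : ¬ (b = a) := by
        rintro rfl
        exact h (by simp [elems])
      have h' : a ∉ elems D := fun hm => h (by simp [elems] at hm ⊢; exact .inr hm)
      rw [wt_cons, ih h', if_neg hba, add_zero]

lemma sum_wt_eq_weight {D : PDist A} {s : Finset A} (h : ∀ pa ∈ D, pa.2 ∈ s) :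
    ∑ a ∈ s, wt D a = weight D := by
  induction D with
  | nil => simp [wt_nil, weight_nil]
  | cons pa D ih =>
      obtain ⟨p, b⟩ := pa
      have hb : b ∈ s := h (p, b) (by simp)
      have h' : ∀ pa ∈ D, pa.2 ∈ s := fun pa hpa => h pa (List.mem_cons_of_mem _ hpa)
      simp only [wt_cons, Finset.sum_add_distrib, ih h', weight_cons]
      congr 1
      rw [Finset.sum_ite_eq s b (fun _ => p), if_pos hb]

lemma sum_wt_nonterm_eq_liv {D : PDist A} {s : Finset A} (h : ∀ pa ∈ D, pa.2 ∈ s) :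
    ∑ a ∈ s, (if Terminal R a then 0 else wt D a) = liv R D := by
  induction D with
  | nil => simp [wt_nil, liv_nil]
  | cons pa D ih =>
      obtain ⟨p, b⟩ := pa
      have hb : b ∈ s := h (p, b) (by simp)
      have h' : ∀ pa ∈ D, pa.2 ∈ s := fun pa hpa => h pa (List.mem_cons_of_mem _ hpa)
      rw [liv_cons, ← ih h']
      have key : ∀ a ∈ s, (if Terminal R a then 0 else wt ((p,b)::D) a)
          = (if b = a then (if Terminal R a then 0 else p) else 0)
            + (if Terminal R a then 0 else wt D a) := by
        intro a _
        rw [wt_cons]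
        split_ifs <;> ring
      rw [Finset.sum_congr rfl key, Finset.sum_add_distrib,
        Finset.sum_ite_eq s b (fun a => if Terminal R a then 0 else p), if_pos hb]

lemma mem_elems {D : PDist A} {pa : ℝ≥0 × A} (h : pa ∈ D) : pa.2 ∈ elems D := by
  simp only [elems, List.mem_toFinset, List.mem_map]
  exact ⟨pa, h, rfl⟩

end PPARS
namespace PPARS
open Classical
variable {A : Type} {R : A → PDist A → Prop}

lemma summable_wt (D : PDist A) : Summable (fun a => (wt D a : ℝ)) := by
  classical
  apply summable_of_ne_finset_zero (s := elems D)
  intro a ha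
  rw [wt_eq_zero_of_not_mem ha, NNReal.coe_zero]

lemma fdist_symm (f g : A → ℝ≥0) : fdist f g = fdist g f := by
  simp only [fdist]
  exact tsum_congr fun a => abs_sub_comm _ _

lemma fdist_triangle' {f g h : A → ℝ≥0}
    (h1 : Summable (fun a => |(f a : ℝ) - g a|))
    (h2 : Summable (fun a => |(g a : ℝ) - h a|)) :
    fdist f h ≤ fdist f g + fdist g h := by
  simp only [fdist]
  rw [← Summable.tsum_add h1 h2]
  refine Summable.tsum_le_tsum (fun a => ?_) ?_ (h1.add h2)
  · exact abs_sub_le _ _ _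
  · exact Summable.of_nonneg_of_le (fun a => abs_nonneg _)
      (fun a => abs_sub_le _ _ _) (h1.add h2)

lemma ldist_le_two_liv (hR : IsPARS R) {D E : PDist A}
    (h : Relation.ReflTransGen (Red R) D E) :
    ldist D E ≤ 2 * (liv R D : ℝ) := by
  classical
  set s : Finset A := elems D ∪ elems E with hs
  have hD : ∀ pa ∈ D, pa.2 ∈ s := fun pa hpa => Finset.mem_union_left _ (mem_elems hpa)
  have hE : ∀ pa ∈ E, pa.2 ∈ s := fun pa hpa => Finset.mem_union_right _ (mem_elems hpa)
  have hzero : ∀ a ∉ s, |(wt D a : ℝ) - wt E a| = 0 := by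
    intro a ha
    rw [wt_eq_zero_of_not_mem (fun hm => ha (Finset.mem_union_left _ hm)),
        wt_eq_zero_of_not_mem (fun hm => ha (Finset.mem_union_right _ hm))]
    simp
  have h1 : ldist D E = ∑ a ∈ s, |(wt D a : ℝ) - wt E a| := by
    simp only [ldist, fdist]
    exact tsum_eq_sum hzero
  have hWE : ∑ a ∈ s, (wt E a : ℝ) = (weight E : ℝ) := by
    rw [← NNReal.coe_sum, sum_wt_eq_weight hE]
  have hWD : ∑ a ∈ s, (wt D a : ℝ) = (weight D : ℝ) := by
    rw [← NNReal.coe_sum, sum_wt_eq_weight hD]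
  have hLD : ∑ a ∈ s, (if Terminal R a then 0 else (wt D a : ℝ)) = (liv R D : ℝ) := by
    rw [← sum_wt_nonterm_eq_liv (R := R) hD, NNReal.coe_sum]
    exact Finset.sum_congr rfl fun a _ => by split_ifs <;> simp
  have hIT : ∑ a ∈ s, (if Terminal R a then (wt D a : ℝ) else 0)
      = (weight D : ℝ) - (liv R D : ℝ) := by
    rw [← hWD, ← hLD, ← Finset.sum_sub_distrib]
    exact Finset.sum_congr rfl fun a _ => by split_ifs <;> ring
  have hw : (weight E : ℝ) = (weight D : ℝ) := by
    rw [red_star_weight hR h]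
  rw [h1]
  calc ∑ a ∈ s, |(wt D a : ℝ) - wt E a|
      ≤ ∑ a ∈ s, ((wt E a : ℝ) + ((wt D a : ℝ)
          - 2 * (if Terminal R a then (wt D a : ℝ) else 0))) := by
        refine Finset.sum_le_sum fun a _ => ?_
        have h0 : (0:ℝ) ≤ wt D a := (wt D a).coe_nonneg
        have h0' : (0:ℝ) ≤ wt E a := (wt E a).coe_nonneg
        by_cases hT : Terminal R a
        · have h2 : (wt D a : ℝ) ≤ wt E a := by
            exact_mod_cast red_star_wt_term h hT
          rw [if_pos hT, abs_sub_comm, abs_of_nonneg (sub_nonneg.mpr h2)]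
          linarith
        · rw [if_neg hT]
          exact abs_le.mpr ⟨by linarith, by linarith⟩
    _ = (∑ a ∈ s, (wt E a : ℝ)) + ((∑ a ∈ s, (wt D a : ℝ))
          - 2 * ∑ a ∈ s, (if Terminal R a then (wt D a : ℝ) else 0)) := by
        rw [Finset.sum_add_distrib, Finset.sum_sub_distrib, Finset.mul_sum]
    _ ≤ 2 * (liv R D : ℝ) := by
        rw [hWE, hWD, hIT, hw]
        ring_nf
        linarith
  
lemma liv_le_fdist {D : PDist A} {G : A → ℝ≥0}
    (hsum : Summable (fun a => (G a : ℝ)))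
    (hterm : ∀ a, ¬ Terminal R a → G a = 0) :
    (liv R D : ℝ) ≤ fdist (wt D) G := by
  classical
  have hD : ∀ pa ∈ D, pa.2 ∈ elems D := fun pa hpa => mem_elems hpa
  have h1 : (liv R D : ℝ)
      = ∑ a ∈ elems D, (if Terminal R a then 0 else (wt D a : ℝ)) := by
    rw [← sum_wt_nonterm_eq_liv (R := R) hD, NNReal.coe_sum]
    exact Finset.sum_congr rfl fun a _ => by split_ifs <;> simp
  have hsummable : Summable (fun a => |(wt D a : ℝ) - G a|) :=
    ((summable_wt D).sub hsum).abs
  rw [h1]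
  refine le_trans (Finset.sum_le_sum fun a _ => ?_)
    (Summable.sum_le_tsum _ (fun a _ => abs_nonneg _) hsummable)
  by_cases hT : Terminal R a
  · rw [if_pos hT]; exact abs_nonneg _
  · rw [if_neg hT, hterm a hT, NNReal.coe_zero, sub_zero,
      abs_of_nonneg (wt D a).coe_nonneg]

end PPARS

open PPARS Relation in
/-- Distribution-confluent PARS have unique limit distributions: limits of two
infinite `↠`-chains with common root, when terminal, coincide. -/
theorem unique_limit_distributions {A : Type} (R : A → PDist A → Prop)
    (hR : IsPARS R) (hconf : Confluent (Red R))
    (D : PDist A) (E F : ℕ → PDist A) (hE0 : E 0 = D) (hF0 : F 0 = D)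
    (hEchain : ∀ i, Red R (E i) (E (i + 1)))
    (hFchain : ∀ i, Red R (F i) (F (i + 1)))
    (Einf Finf : A → ℝ≥0)
    (hEnorm : (∑' a : A, (Einf a : ℝ≥0∞)) = 1)
    (hFnorm : (∑' a : A, (Finf a : ℝ≥0∞)) = 1)
    (hEterm : ∀ a : A, (∃ G, R a G) → Einf a = 0)
    (hFterm : ∀ a : A, (∃ G, R a G) → Finf a = 0)
    (hElim : ∀ ε : ℝ, 0 < ε → ∃ N : ℕ, ∀ i ≥ N, fdist (wt (E i)) Einf < ε)
    (hFlim : ∀ ε : ℝ, 0 < ε → ∃ N : ℕ, ∀ i ≥ N, fdist (wt (F i)) Finf < ε) :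
    Einf = Finf := by
  classical
  have hEsum : Summable (fun a => (Einf a : ℝ)) := by
    refine NNReal.summable_coe.mpr ?_
    refine ENNReal.tsum_coe_ne_top_iff_summable.mp ?_
    rw [hEnorm]; exact ENNReal.one_ne_top
  have hFsum : Summable (fun a => (Finf a : ℝ)) := by
    refine NNReal.summable_coe.mpr ?_
    refine ENNReal.tsum_coe_ne_top_iff_summable.mp ?_
    rw [hFnorm]; exact ENNReal.one_ne_top
  have hEterm' : ∀ a, ¬ Terminal R a → Einf a = 0 := by
    intro a ha
    apply hEterm
    unfold Terminal at ha; push_neg at ha; exact ha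
  have hFterm' : ∀ a, ¬ Terminal R a → Finf a = 0 := by
    intro a ha
    apply hFterm
    unfold Terminal at ha; push_neg at ha; exact ha
  have chainE : ∀ i, ReflTransGen (Red R) D (E i) := by
    intro i
    induction i with
    | zero => rw [hE0]
    | succ i ih => exact ih.tail (hEchain i)
  have chainF : ∀ i, ReflTransGen (Red R) D (F i) := by
    intro i
    induction i with
    | zero => rw [hF0]
    | succ i ih => exact ih.tail (hFchain i)
  have key : ∀ ε : ℝ, 0 < ε → fdist Einf Finf ≤ ε := by
    intro ε hε
    obtain ⟨N1, hN1⟩ := hElim (ε/6) (by linarith)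
    obtain ⟨N2, hN2⟩ := hFlim (ε/6) (by linarith)
    have hE1 : fdist (wt (E N1)) Einf < ε/6 := hN1 N1 le_rfl
    have hF1 : fdist (wt (F N2)) Finf < ε/6 := hN2 N2 le_rfl
    obtain ⟨C, hEC, hFC⟩ := hconf D (E N1) (F N2) (chainE N1) (chainF N2)
    have hlivE : (liv R (E N1) : ℝ) ≤ fdist (wt (E N1)) Einf :=
      liv_le_fdist hEsum hEterm'
    have hlivF : (liv R (F N2) : ℝ) ≤ fdist (wt (F N2)) Finf :=
      liv_le_fdist hFsum hFterm'
    have d1 : ldist (E N1) C ≤ 2 * (liv R (E N1) : ℝ) := ldist_le_two_liv hR hEC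
    have d2 : ldist (F N2) C ≤ 2 * (liv R (F N2) : ℝ) := ldist_le_two_liv hR hFC
    -- summabilities
    have s1 : Summable (fun a => |(Einf a : ℝ) - wt (E N1) a|) :=
      (hEsum.sub (summable_wt _)).abs
    have s2 : Summable (fun a => |(wt (E N1) a : ℝ) - wt C a|) :=
      ((summable_wt _).sub (summable_wt _)).abs
    have s3 : Summable (fun a => |(wt C a : ℝ) - wt (F N2) a|) :=
      ((summable_wt _).sub (summable_wt _)).abs
    have s4 : Summable (fun a => |(wt (F N2) a : ℝ) - Finf a|) :=
      ((summable_wt _).sub hFsum).abs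
    have s34 : Summable (fun a => |(wt C a : ℝ) - Finf a|) :=
      ((summable_wt _).sub hFsum).abs
    have s234 : Summable (fun a => |(wt (E N1) a : ℝ) - Finf a|) :=
      ((summable_wt _).sub hFsum).abs
    have t3 : fdist (wt C) Finf ≤ fdist (wt C) (wt (F N2)) + fdist (wt (F N2)) Finf :=
      fdist_triangle' s3 s4
    have t2 : fdist (wt (E N1)) Finf ≤ fdist (wt (E N1)) (wt C) + fdist (wt C) Finf :=
      fdist_triangle' s2 s34
    have t1 : fdist Einf Finf ≤ fdist Einf (wt (E N1)) + fdist (wt (E N1)) Finf :=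
      fdist_triangle' s1 s234
    have e1 : fdist Einf (wt (E N1)) = fdist (wt (E N1)) Einf := fdist_symm _ _
    have e2 : fdist (wt (E N1)) (wt C) = ldist (E N1) C := rfl
    have e3 : fdist (wt C) (wt (F N2)) = ldist (F N2) C := fdist_symm _ _
    linarith
  have hnonneg : 0 ≤ fdist Einf Finf := tsum_nonneg fun a => abs_nonneg _
  have hzero : fdist Einf Finf = 0 := by
    by_contra h
    have hpos : 0 < fdist Einf Finf := lt_of_le_of_ne hnonneg (Ne.symm h)
    have := key (fdist Einf Finf / 2) (by linarith)
    linarith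
  have habs : Summable (fun a => |(Einf a : ℝ) - Finf a|) := (hEsum.sub hFsum).abs
  funext a
  have hle : |(Einf a : ℝ) - Finf a| ≤ fdist Einf Finf :=
    Summable.le_tsum habs a fun b _ => abs_nonneg _
  have : |(Einf a : ℝ) - Finf a| = 0 := le_antisymm (hzero ▸ hle) (abs_nonneg _)
  have : (Einf a : ℝ) = Finf a := by
    have := abs_eq_zero.mp this
    linarith
  exact_mod_cast this
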